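/- arXiv:1505.02402 — 4 statements merged into one kernel-verified Lean document; each statement's English description precedes it below -/
import Mathlib

section
/- Upper quadratic bound on the Lyapunov–Krasovskii functional (Lemma 1): for every x ∈ ℝⁿ and every piecewise continuous φ : [-h,0) → ℝʳ, v(x, φ) ≤ M (‖x‖² + ‖φ‖²), where M = max{ 2 λ_max(V), λ_max(W'') + 2 h λ_max(V) · max_{θ ∈ [-h,0]} ‖Q(θ)‖² } and ‖φ‖² = ∫_{-h}^0 ‖φ(θ)‖² dθ. -/
open scoped Matrix.Norms.L2Operator
open Matrix MeasureTheory

/-- Minimal eigenvalue of a (symmetric) real matrix, as the infimum of its real spectrum. -/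
noncomputable def lamMin {n : ℕ} (M : Matrix (Fin n) (Fin n) ℝ) : ℝ := sInf (spectrum ℝ M)

/-- Maximal eigenvalue of a (symmetric) real matrix, as the supremum of its real spectrum. -/
noncomputable def lamMax {n : ℕ} (M : Matrix (Fin n) (Fin n) ℝ) : ℝ := sSup (spectrum ℝ M)

/-- `f` is piecewise continuous on `s ⊆ ℝ`: continuous within `s` away from a finite
exceptional set, and bounded on `s`. -/
def PiecewiseContinuousOn {E : Type*} [NormedAddCommGroup E] (f : ℝ → E) (s : Set ℝ) : Prop :=
  ∃ t : Finset ℝ, (∀ x ∈ s \ (t : Set ℝ), ContinuousWithinAt f s x) ∧ ∃ C, ∀ x ∈ s, ‖f x‖ ≤ C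

/-! ### Auxiliary lemmas -/

lemma spectrum_pos_of_posDef {k : ℕ} {P : Matrix (Fin k) (Fin k) ℝ} (hP : P.PosDef) :
    ∀ μ ∈ spectrum ℝ P, 0 < μ := by
  intro μ hμ
  have h1 : μ ∈ spectrum ℝ (Matrix.toLinAlgEquiv' P) := by
    rwa [AlgEquiv.spectrum_eq]
  have h2 : Module.End.HasEigenvalue (Matrix.toLinAlgEquiv' P) μ :=
    Module.End.hasEigenvalue_iff_mem_spectrum.mpr h1
  obtain ⟨v, hv⟩ := h2.exists_hasEigenvector
  have hvP : P *ᵥ v = μ • v := by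
    have := hv.apply_eq_smul
    rwa [Matrix.toLinAlgEquiv'_apply] at this
  have hpos : 0 < v ⬝ᵥ P *ᵥ v := by
    have := hP.dotProduct_mulVec_pos hv.2
    simpa using this
  rw [hvP] at hpos
  have hvv : 0 < v ⬝ᵥ v := by
    rcases (Finset.sum_nonneg fun i _ => mul_self_nonneg (v i)).lt_or_eq with h | h
    · exact h
    · exact absurd ((dotProduct_self_eq_zero).mp h.symm) hv.2
  have hμvv : 0 < μ * (v ⬝ᵥ v) := by
    simpa [dotProduct_smul, smul_eq_mul, Finset.mul_sum, dotProduct,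
      mul_left_comm, mul_comm] using hpos
  by_contra hc
  push_neg at hc
  nlinarith

lemma quadForm_le_lamMax {k : ℕ} {P : Matrix (Fin k) (Fin k) ℝ} (hP : P.IsHermitian)
    (x : Fin k → ℝ) : x ⬝ᵥ P *ᵥ x ≤ lamMax P * (x ⬝ᵥ x) := by
  have hbdd : BddAbove (spectrum ℝ P) := (spectrum.isBounded P).bddAbove
  have hle : ∀ i, hP.eigenvalues i ≤ lamMax P := fun i =>
    le_csSup hbdd (hP.eigenvalues_mem_spectrum_real i)
  set U : Matrix (Fin k) (Fin k) ℝ := (hP.eigenvectorUnitary : Matrix (Fin k) (Fin k) ℝ) with hUdef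
  have hU1 : U * star U = 1 := Matrix.mem_unitaryGroup_iff.mp hP.eigenvectorUnitary.2
  have hstar : star U = Uᵀ := by
    rw [Matrix.star_eq_conjTranspose, Matrix.conjTranspose_eq_transpose_of_trivial]
  set z : Fin k → ℝ := x ᵥ* U with hz
  have hzz : z ⬝ᵥ z = x ⬝ᵥ x := by
    rw [hz, ← Matrix.mulVec_transpose U x, Matrix.dotProduct_mulVec, Matrix.vecMul_transpose,
      Matrix.mulVec_mulVec, ← hstar, hU1, Matrix.one_mulVec]
  have hquad : x ⬝ᵥ P *ᵥ x = ∑ i, hP.eigenvalues i * (z i * z i) := by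
    conv_lhs => rw [hP.spectral_theorem, Unitary.conjStarAlgAut_apply]
    rw [← hUdef, Matrix.dotProduct_mulVec, ← Matrix.vecMul_vecMul, ← Matrix.vecMul_vecMul, hstar,
      Matrix.vecMul_transpose, dotProduct_comm, Matrix.dotProduct_mulVec, ← hz]
    simp only [dotProduct, Matrix.vecMul_diagonal, Function.comp_apply,
      RCLike.ofReal_real_eq_id, id]
    exact Finset.sum_congr rfl fun i _ => by ring
  rw [hquad, ← hzz, dotProduct, Finset.mul_sum]
  exact Finset.sum_le_sum fun i _ =>
    mul_le_mul_of_nonneg_right (hle i) (mul_self_nonneg (z i))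

lemma sq_integral_le {μ : Measure ℝ} [IsFiniteMeasure μ] {f : ℝ → ℝ}
    (hf : Integrable f μ) (hf2 : Integrable (fun x => f x ^ 2) μ) :
    (∫ x, f x ∂μ) ^ 2 ≤ (μ Set.univ).toReal * ∫ x, f x ^ 2 ∂μ := by
  set c : ℝ := (μ Set.univ).toReal with hc
  have hc0 : 0 ≤ c := ENNReal.toReal_nonneg
  rcases eq_or_lt_of_le hc0 with hc' | hc'
  · have h0 : (μ Set.univ).toReal = 0 := by rw [← hc, ← hc']
    have hμ0 : μ = 0 := by
      rcases (ENNReal.toReal_eq_zero_iff _).mp h0 with h | h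
      · exact Measure.measure_univ_eq_zero.mp h
      · exact absurd h (measure_ne_top μ _)
    simp [hμ0]
  · set I : ℝ := ∫ x, f x ∂μ with hI
    set m : ℝ := I / c with hm
    set J : ℝ := ∫ x, f x ^ 2 ∂μ with hJ
    have hsub : Integrable (fun x => f x ^ 2 - 2 * m * f x) μ := hf2.sub (hf.const_mul _)
    have hexp : ∫ x, (f x - m) ^ 2 ∂μ = J - 2 * m * I + m ^ 2 * c := by
      have h1 : ∀ x, (f x - m) ^ 2 = f x ^ 2 - 2 * m * f x + m ^ 2 := fun x => by ring
      simp_rw [h1]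
      rw [integral_add hsub (integrable_const _), integral_sub hf2 (hf.const_mul _),
        integral_const_mul, integral_const, smul_eq_mul, measureReal_def, ← hI, ← hJ, ← hc, mul_comm c]
    have hnn : 0 ≤ J - 2 * m * I + m ^ 2 * c := hexp ▸ integral_nonneg fun x => sq_nonneg _
    have hmc : m * c = I := by rw [hm]; exact div_mul_cancel₀ I hc'.ne'
    have h2 : 0 ≤ c * (J - 2 * m * I + m ^ 2 * c) := mul_nonneg hc0 hnn
    have h3 : c * (J - 2 * m * I + m ^ 2 * c) = c * J - I ^ 2 := by rw [← hmc]; ring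
    rw [h3] at h2
    linarith [h2]

lemma pcw_aesm_bound {E : Type*} [NormedAddCommGroup E] {φ : ℝ → E} {a b : ℝ}
    (hφ : PiecewiseContinuousOn φ (Set.Ico a b)) :
    AEStronglyMeasurable φ (volume.restrict (Set.Ioc a b)) ∧
      ∃ C, 0 ≤ C ∧ ∀ᵐ x ∂(volume.restrict (Set.Ioc a b)), ‖φ x‖ ≤ C := by
  obtain ⟨t, hcont, C0, hC⟩ := hφ
  set s' : Set ℝ := Set.Ico a b \ (t : Set ℝ) with hs'
  have hms' : MeasurableSet s' := measurableSet_Ico.diff (t.finite_toSet.measurableSet)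
  have hcont' : ContinuousOn φ s' := fun x hx => (hcont x hx).mono Set.diff_subset
  have haesm' : AEStronglyMeasurable φ (volume.restrict s') :=
    hcont'.aestronglyMeasurable hms'
  have hae : Set.Ioc a b =ᵐ[volume] s' := by
    refine MeasureTheory.ae_eq_set.mpr ⟨measure_mono_null ?_
      (((Set.countable_singleton b).union t.countable_toSet).measure_zero _),
      measure_mono_null ?_ ((Set.countable_singleton a).measure_zero _)⟩
    · intro x hx
      simp only [hs', Set.mem_diff, Set.mem_Ioc, Set.mem_Ico, not_and, not_not,
        Set.mem_union, Set.mem_singleton_iff] at hx ⊢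
      rcases hx with ⟨⟨hax, hxb⟩, hx2⟩
      by_cases hxt : x ∈ (t : Set ℝ)
      · exact Or.inr hxt
      · left
        by_contra hne
        exact hxt (hx2 ⟨hax.le, lt_of_le_of_ne hxb hne⟩)
    · intro x hx
      simp only [hs', Set.mem_diff, Set.mem_Ioc, Set.mem_Ico, not_and,
        Set.mem_singleton_iff] at hx ⊢
      rcases hx with ⟨⟨⟨hax, hxb⟩, _⟩, hx2⟩
      by_contra hne
      exact (hx2 (lt_of_le_of_ne hax (Ne.symm hne))) hxb.le
  have hrestr : volume.restrict (Set.Ioc a b) = volume.restrict s' :=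
    Measure.restrict_congr_set hae
  constructor
  · rw [hrestr]; exact haesm'
  · refine ⟨max C0 0, le_max_right _ _, ?_⟩
    rw [hrestr]
    filter_upwards [ae_restrict_mem hms'] with x hx
    exact (hC x hx.1).trans (le_max_left _ _)

lemma enorm_sq {k : ℕ} (v : Fin k → ℝ) :
    ‖(EuclideanSpace.equiv (Fin k) ℝ).symm v‖ ^ 2 = v ⬝ᵥ v := by
  rw [EuclideanSpace.norm_eq]
  rw [Real.sq_sqrt (Finset.sum_nonneg fun i _ => sq_nonneg _)]
  simp [dotProduct, Real.norm_eq_abs, sq_abs, pow_two]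

lemma enorm_le_sqrt_card {k : ℕ} (v : Fin k → ℝ) :
    ‖(EuclideanSpace.equiv (Fin k) ℝ).symm v‖ ≤ Real.sqrt k * ‖v‖ := by
  rw [EuclideanSpace.norm_eq, ← Real.sqrt_sq (norm_nonneg v), ← Real.sqrt_mul (Nat.cast_nonneg k)]
  apply Real.sqrt_le_sqrt
  calc ∑ i, ‖((EuclideanSpace.equiv (Fin k) ℝ).symm v) i‖ ^ 2
      ≤ ∑ _i : Fin k, ‖v‖ ^ 2 := by
        refine Finset.sum_le_sum fun i _ => ?_
        have : ‖((EuclideanSpace.equiv (Fin k) ℝ).symm v) i‖ = ‖v i‖ := rfl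
        rw [this]
        exact pow_le_pow_left₀ (norm_nonneg _) (norm_le_pi_norm v i) 2
    _ = (k : ℝ) * ‖v‖ ^ 2 := by simp [Finset.sum_const, nsmul_eq_mul]

lemma dotProduct_self_nonneg' {k : ℕ} (v : Fin k → ℝ) : 0 ≤ v ⬝ᵥ v :=
  Finset.sum_nonneg fun i _ => mul_self_nonneg (v i)

lemma continuous_dotSelf (k : ℕ) : Continuous fun v : Fin k → ℝ => v ⬝ᵥ v := by
  have : (fun v : Fin k → ℝ => v ⬝ᵥ v) = fun v => ∑ i, v i * v i := rfl
  rw [this]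
  exact continuous_finset_sum _ fun i _ => (continuous_apply i).mul (continuous_apply i)

lemma qbound_exists
    {n r N : ℕ}
    (A : Matrix (Fin n) (Fin n) ℝ)
    (B : Fin N → Matrix (Fin n) (Fin r) ℝ)
    (hd : Fin N → ℝ) (hd_nonneg : ∀ i, 0 ≤ hd i)
    (hint : ℝ) (hint_nonneg : 0 ≤ hint)
    (Bint : ℝ → Matrix (Fin n) (Fin r) ℝ)
    (hBint : PiecewiseContinuousOn Bint (Set.Icc (-hint) 0))
    (h : ℝ) (hh1 : ∀ i, hd i ≤ h) (hh2 : hint ≤ h)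
    (Q : ℝ → Matrix (Fin n) (Fin r) ℝ)
    (hQ : ∀ θ ∈ Set.Icc (-h) 0, Q θ =
      (∑ i : Fin N, if -hd i ≤ θ then NormedSpace.exp ((-hd i - θ) • A) * B i else 0)
      + ∫ τ in Set.Ioc (-hint) θ, NormedSpace.exp ((τ - θ) • A) * Bint τ) :
    ∃ K : ℝ, 0 ≤ K ∧ ∀ θ ∈ Set.Icc (-h) 0, ‖Q θ‖ ≤ K := by
  have h0 : (0 : ℝ) ≤ h := hint_nonneg.trans hh2
  have hexpc : Continuous fun s : ℝ => ‖NormedSpace.exp (s • A)‖ := by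
    let +nondep : NormedAlgebra ℚ (Matrix (Fin n) (Fin n) ℝ) := .restrictScalars ℚ ℝ _
    exact (NormedSpace.exp_continuous.comp (continuous_id.smul continuous_const)).norm
  obtain ⟨s0, hs0mem, hs0⟩ := (isCompact_Icc (a := -h) (b := h)).exists_isMaxOn
    ⟨0, by constructor <;> linarith⟩ hexpc.continuousOn
  set E : ℝ := ‖NormedSpace.exp (s0 • A)‖ with hEdef
  have hE0 : 0 ≤ E := norm_nonneg _
  have hE : ∀ s ∈ Set.Icc (-h) h, ‖NormedSpace.exp (s • A)‖ ≤ E := fun s hs => hs0 hs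
  obtain ⟨tB, hBc, CB0, hCB⟩ := hBint
  set CB : ℝ := max CB0 0 with hCBdef
  have hCB0 : 0 ≤ CB := le_max_right _ _
  have hCB' : ∀ τ ∈ Set.Icc (-hint) 0, ‖Bint τ‖ ≤ CB := fun τ hτ =>
    (hCB τ hτ).trans (le_max_left _ _)
  refine ⟨(∑ i, E * ‖B i‖) + E * CB * h, ?_, ?_⟩
  · have : 0 ≤ ∑ i, E * ‖B i‖ :=
      Finset.sum_nonneg fun i _ => mul_nonneg hE0 (norm_nonneg _)
    positivity
  intro θ hθ
  obtain ⟨hθ1, hθ2⟩ := hθ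
  rw [hQ θ ⟨hθ1, hθ2⟩]
  refine (norm_add_le _ _).trans (add_le_add ?_ ?_)
  · refine (norm_sum_le _ _).trans (Finset.sum_le_sum fun i _ => ?_)
    by_cases hcase : -hd i ≤ θ
    · rw [if_pos hcase]
      refine (Matrix.l2_opNorm_mul _ _).trans ?_
      refine mul_le_mul_of_nonneg_right (hE _ ?_) (norm_nonneg _)
      constructor
      · have := hh1 i; linarith
      · have := hd_nonneg i; linarith
    · rw [if_neg hcase, norm_zero]
      exact mul_nonneg hE0 (norm_nonneg _)
  · calc ‖∫ τ in Set.Ioc (-hint) θ, NormedSpace.exp ((τ - θ) • A) * Bint τ‖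
        ≤ ∫ τ in Set.Ioc (-hint) θ, ‖NormedSpace.exp ((τ - θ) • A) * Bint τ‖ :=
          norm_integral_le_integral_norm _
      _ ≤ ∫ _τ in Set.Ioc (-hint) θ, (E * CB) := by
          refine integral_mono_of_nonneg (Filter.Eventually.of_forall fun τ => norm_nonneg _)
            (integrableOn_const measure_Ioc_lt_top.ne) ?_
          filter_upwards [ae_restrict_mem measurableSet_Ioc] with τ hτ
          refine (Matrix.l2_opNorm_mul _ _).trans (mul_le_mul (hE _ ?_) (hCB' τ ?_)
            (norm_nonneg _) hE0)
          · constructor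
            · have : -hint < τ := hτ.1; linarith
            · have : τ ≤ θ := hτ.2; linarith
          · exact ⟨hτ.1.le, hτ.2.trans hθ2⟩
      _ = (volume (Set.Ioc (-hint) θ)).toReal * (E * CB) := by
          rw [setIntegral_const, smul_eq_mul, measureReal_def]
      _ ≤ h * (E * CB) := by
          refine mul_le_mul_of_nonneg_right ?_ (mul_nonneg hE0 hCB0)
          have hsub : Set.Ioc (-hint) θ ⊆ Set.Ioc (-h) 0 :=
            Set.Ioc_subset_Ioc (by linarith) hθ2
          calc (volume (Set.Ioc (-hint) θ)).toReal
              ≤ (volume (Set.Ioc (-h) 0)).toReal :=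
                ENNReal.toReal_mono (by simp [Real.volume_Ioc]) (measure_mono hsub)
            _ = h := by rw [Real.volume_Ioc]; simp [h0]
      _ = E * CB * h := by ring

/-- **Lemma 1**: upper quadratic bound on the Lyapunov–Krasovskii functional
`v(x,φ) = ‖x + ∫ Q φ‖_V² + ∫ e^{σθ} φᵀ W'' φ`. -/
theorem lyapunov_functional_upper_bound
    {n r N : ℕ}
    (A : Matrix (Fin n) (Fin n) ℝ)
    (B : Fin N → Matrix (Fin n) (Fin r) ℝ)
    (hd : Fin N → ℝ) (hd_nonneg : ∀ i, 0 ≤ hd i)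
    (hint : ℝ) (hint_nonneg : 0 ≤ hint)
    (Bint : ℝ → Matrix (Fin n) (Fin r) ℝ)
    (hBint : PiecewiseContinuousOn Bint (Set.Icc (-hint) 0))
    (h : ℝ) (hh1 : ∀ i, hd i ≤ h) (hh2 : hint ≤ h)
    (Q : ℝ → Matrix (Fin n) (Fin r) ℝ)
    (hQ : ∀ θ ∈ Set.Icc (-h) 0, Q θ =
      (∑ i : Fin N, if -hd i ≤ θ then NormedSpace.exp ((-hd i - θ) • A) * B i else 0)
      + ∫ τ in Set.Ioc (-hint) θ, NormedSpace.exp ((τ - θ) • A) * Bint τ)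
    (F : Matrix (Fin r) (Fin n) ℝ)
    (W1 : Matrix (Fin n) (Fin n) ℝ) (hW1 : W1.PosDef)
    (W2 : Matrix (Fin r) (Fin r) ℝ) (hW2 : W2.PosDef)
    (V : Matrix (Fin n) (Fin n) ℝ) (hV : V.PosDef)
    (hLyap : (A + Q 0 * F)ᵀ * V + V * (A + Q 0 * F) = -(W1 + (2 : ℝ) • (Fᵀ * W2 * F)))
    (σ : ℝ) (hσ : σ = lamMin W1 / lamMax V)
    (M : ℝ)
    (hM : M = max (2 * lamMax V)
      (lamMax W2 + 2 * h * lamMax V * sSup ((fun θ => ‖Q θ‖ ^ 2) '' Set.Icc (-h) 0))) :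
    ∀ (x : Fin n → ℝ) (φ : ℝ → Fin r → ℝ),
      PiecewiseContinuousOn φ (Set.Ico (-h) 0) →
      (x + ∫ θ in (-h)..0, (Q θ).mulVec (φ θ)) ⬝ᵥ
          V.mulVec (x + ∫ θ in (-h)..0, (Q θ).mulVec (φ θ))
        + ∫ θ in (-h)..0, Real.exp (σ * θ) * (φ θ ⬝ᵥ W2.mulVec (φ θ))
      ≤ M * (x ⬝ᵥ x + ∫ θ in (-h)..0, φ θ ⬝ᵥ φ θ) := by
  intro x φ hφ
  have h0 : (0 : ℝ) ≤ h := hint_nonneg.trans hh2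
  have hneg : (-h : ℝ) ≤ 0 := by linarith
  have hσ0 : 0 ≤ σ := by
    rw [hσ]
    exact div_nonneg (Real.sInf_nonneg fun μ (hμ : μ ∈ spectrum ℝ W1) => (spectrum_pos_of_posDef hW1 μ hμ).le)
      (Real.sSup_nonneg fun μ (hμ : μ ∈ spectrum ℝ V) => (spectrum_pos_of_posDef hV μ hμ).le)
  have hlamV0 : 0 ≤ lamMax V :=
    Real.sSup_nonneg fun μ (hμ : μ ∈ spectrum ℝ V) => (spectrum_pos_of_posDef hV μ hμ).le
  -- supremum of ‖Q‖²
  obtain ⟨K, hK0, hK⟩ := qbound_exists A B hd hd_nonneg hint hint_nonneg Bint hBint h hh1 hh2 Q hQ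
  set T : ℝ := sSup ((fun θ => ‖Q θ‖ ^ 2) '' Set.Icc (-h) 0) with hT
  have hbddT : BddAbove ((fun θ => ‖Q θ‖ ^ 2) '' Set.Icc (-h) 0) := by
    refine ⟨K ^ 2, ?_⟩
    rintro y ⟨θ, hθ, rfl⟩
    exact pow_le_pow_left₀ (norm_nonneg _) (hK θ hθ) 2
  have hTmem : ∀ θ ∈ Set.Icc (-h) 0, ‖Q θ‖ ^ 2 ≤ T := fun θ hθ =>
    le_csSup hbddT ⟨θ, hθ, rfl⟩
  have hT0 : 0 ≤ T := le_trans (sq_nonneg ‖Q 0‖) (hTmem 0 ⟨hneg, le_rfl⟩)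
  have hQle : ∀ θ ∈ Set.Icc (-h) 0, ‖Q θ‖ ≤ Real.sqrt T := fun θ hθ => by
    rw [← Real.sqrt_sq (norm_nonneg (Q θ))]
    exact Real.sqrt_le_sqrt (hTmem θ hθ)
  -- measure setup
  haveI : IsFiniteMeasure (volume.restrict (Set.Ioc (-h : ℝ) 0)) :=
    ⟨by rw [Measure.restrict_apply_univ]; exact measure_Ioc_lt_top⟩
  have hvol : ((volume.restrict (Set.Ioc (-h : ℝ) 0)) Set.univ).toReal = h := by
    rw [Measure.restrict_apply_univ, Real.volume_Ioc]
    simp [h0]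
  obtain ⟨hφm, C, hC0, hφb⟩ := pcw_aesm_bound (a := -h) (b := 0) hφ
  -- the scalar functions gE (euclidean norm of φ) and g2 (its square)
  set gE : ℝ → ℝ := fun θ => ‖(EuclideanSpace.equiv (Fin r) ℝ).symm (φ θ)‖ with hgEdef
  set g2 : ℝ → ℝ := fun θ => φ θ ⬝ᵥ φ θ with hg2def
  have hgE0 : ∀ θ, 0 ≤ gE θ := fun θ => norm_nonneg _
  have hgEsq : ∀ θ, gE θ ^ 2 = g2 θ := fun θ => enorm_sq (φ θ)
  have hgEle : ∀ θ, ‖φ θ‖ ≤ C → gE θ ≤ Real.sqrt r * C := fun θ hθ =>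
    (enorm_le_sqrt_card (φ θ)).trans (mul_le_mul_of_nonneg_left hθ (Real.sqrt_nonneg _))
  have hgEm : AEStronglyMeasurable gE (volume.restrict (Set.Ioc (-h : ℝ) 0)) :=
    (continuous_norm.comp
      (EuclideanSpace.equiv (Fin r) ℝ).symm.continuous).comp_aestronglyMeasurable hφm
  have hgE_int : Integrable gE (volume.restrict (Set.Ioc (-h : ℝ) 0)) := by
    refine Integrable.mono' (integrable_const (Real.sqrt r * C)) hgEm ?_
    filter_upwards [hφb] with θ hθ
    rw [Real.norm_eq_abs, abs_of_nonneg (hgE0 θ)]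
    exact hgEle θ hθ
  have hg2m : AEStronglyMeasurable g2 (volume.restrict (Set.Ioc (-h : ℝ) 0)) :=
    (continuous_dotSelf r).comp_aestronglyMeasurable hφm
  have hg2_int : Integrable g2 (volume.restrict (Set.Ioc (-h : ℝ) 0)) := by
    refine Integrable.mono' (integrable_const ((Real.sqrt r * C) ^ 2)) hg2m ?_
    filter_upwards [hφb] with θ hθ
    rw [Real.norm_eq_abs, ← hgEsq θ, abs_of_nonneg (sq_nonneg _)]
    exact pow_le_pow_left₀ (hgE0 θ) (hgEle θ hθ) 2
  have hgE2_int : Integrable (fun θ => gE θ ^ 2) (volume.restrict (Set.Ioc (-h : ℝ) 0)) :=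
    hg2_int.congr (Filter.Eventually.of_forall fun θ => (hgEsq θ).symm)
  have hg2nn : ∀ θ, 0 ≤ g2 θ := fun θ => dotProduct_self_nonneg' (φ θ)
  have hIg2 : 0 ≤ ∫ θ in Set.Ioc (-h : ℝ) 0, g2 θ := integral_nonneg hg2nn
  -- the integral term u
  set u : Fin n → ℝ := ∫ θ in (-h : ℝ)..0, (Q θ).mulVec (φ θ) with hudef
  have hu : u = ∫ θ in Set.Ioc (-h : ℝ) 0, (Q θ).mulVec (φ θ) := by
    rw [hudef, intervalIntegral.integral_of_le hneg]
  have hunorm : ‖(EuclideanSpace.equiv (Fin n) ℝ).symm u‖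
      ≤ Real.sqrt T * ∫ θ in Set.Ioc (-h : ℝ) 0, gE θ := by
    rw [hu, ← ContinuousLinearEquiv.integral_comp_comm]
    calc ‖∫ θ in Set.Ioc (-h : ℝ) 0,
            (EuclideanSpace.equiv (Fin n) ℝ).symm ((Q θ).mulVec (φ θ))‖
        ≤ ∫ θ in Set.Ioc (-h : ℝ) 0,
            ‖(EuclideanSpace.equiv (Fin n) ℝ).symm ((Q θ).mulVec (φ θ))‖ :=
          norm_integral_le_integral_norm _
      _ ≤ ∫ θ in Set.Ioc (-h : ℝ) 0, Real.sqrt T * gE θ := by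
          refine integral_mono_of_nonneg (Filter.Eventually.of_forall fun θ => norm_nonneg _)
            (hgE_int.const_mul _) ?_
          filter_upwards [ae_restrict_mem measurableSet_Ioc] with θ hθ
          refine ((Q θ).l2_opNorm_mulVec
            ((EuclideanSpace.equiv (Fin r) ℝ).symm (φ θ))).trans ?_
          exact mul_le_mul_of_nonneg_right (hQle θ ⟨hθ.1.le, hθ.2⟩) (norm_nonneg _)
      _ = Real.sqrt T * ∫ θ in Set.Ioc (-h : ℝ) 0, gE θ := integral_const_mul _ _
  -- Cauchy–Schwarz for gE
  have hCS : (∫ θ in Set.Ioc (-h : ℝ) 0, gE θ) ^ 2 ≤ h * ∫ θ in Set.Ioc (-h : ℝ) 0, g2 θ := by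
    have := sq_integral_le hgE_int hgE2_int
    rw [hvol] at this
    rwa [integral_congr_ae (Filter.Eventually.of_forall hgEsq)] at this
  -- bound for the quadratic form in V
  have hZ : (x + u) ⬝ᵥ (x + u)
      ≤ 2 * (x ⬝ᵥ x) + 2 * (T * (h * ∫ θ in Set.Ioc (-h : ℝ) 0, g2 θ)) := by
    have e1 : (x + u) ⬝ᵥ (x + u) = ‖(EuclideanSpace.equiv (Fin n) ℝ).symm (x + u)‖ ^ 2 :=
      (enorm_sq _).symm
    have e2 : ‖(EuclideanSpace.equiv (Fin n) ℝ).symm (x + u)‖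
        ≤ ‖(EuclideanSpace.equiv (Fin n) ℝ).symm x‖
          + ‖(EuclideanSpace.equiv (Fin n) ℝ).symm u‖ := by
      rw [map_add]; exact norm_add_le _ _
    have e3 : ‖(EuclideanSpace.equiv (Fin n) ℝ).symm x‖ ^ 2 = x ⬝ᵥ x := enorm_sq x
    have e4 : ‖(EuclideanSpace.equiv (Fin n) ℝ).symm u‖ ^ 2
        ≤ T * (h * ∫ θ in Set.Ioc (-h : ℝ) 0, g2 θ) := by
      have p1 := pow_le_pow_left₀ (norm_nonneg _) hunorm 2
      have p2 : (Real.sqrt T * ∫ θ in Set.Ioc (-h : ℝ) 0, gE θ) ^ 2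
          = T * (∫ θ in Set.Ioc (-h : ℝ) 0, gE θ) ^ 2 := by
        rw [mul_pow, Real.sq_sqrt hT0]
      rw [p2] at p1
      exact p1.trans (mul_le_mul_of_nonneg_left hCS hT0)
    rw [e1]
    nlinarith [norm_nonneg ((EuclideanSpace.equiv (Fin n) ℝ).symm x),
      norm_nonneg ((EuclideanSpace.equiv (Fin n) ℝ).symm u),
      sq_nonneg (‖(EuclideanSpace.equiv (Fin n) ℝ).symm x‖
        - ‖(EuclideanSpace.equiv (Fin n) ℝ).symm u‖), e2, e3, e4,
      pow_le_pow_left₀ (norm_nonneg ((EuclideanSpace.equiv (Fin n) ℝ).symm (x + u))) e2 2]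
  have hVq : (x + u) ⬝ᵥ V.mulVec (x + u) ≤ lamMax V * ((x + u) ⬝ᵥ (x + u)) :=
    quadForm_le_lamMax hV.1 _
  -- the W2 integral term
  have hI2 : (∫ θ in (-h : ℝ)..0, Real.exp (σ * θ) * (φ θ ⬝ᵥ W2.mulVec (φ θ)))
      ≤ lamMax W2 * ∫ θ in Set.Ioc (-h : ℝ) 0, g2 θ := by
    rw [intervalIntegral.integral_of_le hneg]
    have hqnn : ∀ θ, 0 ≤ φ θ ⬝ᵥ W2.mulVec (φ θ) := fun θ => by
      have := hW2.posSemidef.dotProduct_mulVec_nonneg (φ θ)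
      simpa using this
    calc ∫ θ in Set.Ioc (-h : ℝ) 0, Real.exp (σ * θ) * (φ θ ⬝ᵥ W2.mulVec (φ θ))
        ≤ ∫ θ in Set.Ioc (-h : ℝ) 0, lamMax W2 * g2 θ := by
          refine integral_mono_of_nonneg
            (Filter.Eventually.of_forall fun θ =>
              mul_nonneg (Real.exp_pos _).le (hqnn θ))
            (hg2_int.const_mul _) ?_
          filter_upwards [ae_restrict_mem measurableSet_Ioc] with θ hθ
          have hexple : Real.exp (σ * θ) ≤ 1 := by
            rw [Real.exp_le_one_iff]
            exact mul_nonpos_iff.mpr (Or.inl ⟨hσ0, hθ.2⟩)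
          calc Real.exp (σ * θ) * (φ θ ⬝ᵥ W2.mulVec (φ θ))
              ≤ 1 * (φ θ ⬝ᵥ W2.mulVec (φ θ)) :=
                mul_le_mul_of_nonneg_right hexple (hqnn θ)
            _ = φ θ ⬝ᵥ W2.mulVec (φ θ) := one_mul _
            _ ≤ lamMax W2 * g2 θ := quadForm_le_lamMax hW2.1 (φ θ)
      _ = lamMax W2 * ∫ θ in Set.Ioc (-h : ℝ) 0, g2 θ := integral_const_mul _ _
  -- assemble
  have hRHS : (∫ θ in (-h : ℝ)..0, φ θ ⬝ᵥ φ θ) = ∫ θ in Set.Ioc (-h : ℝ) 0, g2 θ := by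
    rw [intervalIntegral.integral_of_le hneg]
  have hx0 : 0 ≤ x ⬝ᵥ x := dotProduct_self_nonneg' x
  have hM1 : 2 * lamMax V ≤ M := hM ▸ le_max_left _ _
  have hM2 : lamMax W2 + 2 * h * lamMax V * T ≤ M := hM ▸ le_max_right _ _
  rw [hRHS]
  set b : ℝ := ∫ θ in Set.Ioc (-h : ℝ) 0, g2 θ with hb
  have key : (x + u) ⬝ᵥ V.mulVec (x + u)
      ≤ lamMax V * (2 * (x ⬝ᵥ x) + 2 * (T * (h * b))) :=
    hVq.trans (mul_le_mul_of_nonneg_left hZ hlamV0)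
  have hprod1 : (2 * lamMax V) * (x ⬝ᵥ x) ≤ M * (x ⬝ᵥ x) :=
    mul_le_mul_of_nonneg_right hM1 hx0
  have hprod2 : (lamMax W2 + 2 * h * lamMax V * T) * b ≤ M * b :=
    mul_le_mul_of_nonneg_right hM2 hIg2
  nlinarith [key, hI2, hprod1, hprod2]
end

section
/- Quadratic minimization inequality used in the proof of Lemma 2: let V be a symmetric positive definite n×n matrix, G a symmetric positive semidefinite n×n matrix, and μ > 0. Then for every x ∈ ℝⁿ and every c ∈ ℝⁿ, (Gc)ᵀV(Gc) + μ cᵀGc + 2 cᵀGVx + xᵀVx ≥ xᵀ (V⁻¹ + μ⁻¹ G)⁻¹ x, with equality attained at c = -(G + μ V⁻¹)⁻¹ x. -/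
open Matrix

lemma symm_dot_swap {n : ℕ} (S : Matrix (Fin n) (Fin n) ℝ) (hS : Sᵀ = S) (v w : Fin n → ℝ) :
    v ⬝ᵥ S.mulVec w = S.mulVec v ⬝ᵥ w := by
  rw [Matrix.dotProduct_mulVec, ← Matrix.mulVec_transpose, hS]

/-- Quadratic minimization inequality used in the proof of Lemma 2: for symmetric positive
definite `V`, positive semidefinite `G` and `μ > 0`,
`(Gc)ᵀV(Gc) + μ cᵀGc + 2cᵀGVx + xᵀVx ≥ xᵀ(V⁻¹ + μ⁻¹G)⁻¹x`, with equality at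
`c = -(G + μV⁻¹)⁻¹x`. -/
theorem quadratic_minimization_inequality
    {n : ℕ} (V G : Matrix (Fin n) (Fin n) ℝ)
    (hV : V.PosDef) (hG : G.PosSemidef) (μ : ℝ) (hμ : 0 < μ) :
    (∀ (x c : Fin n → ℝ),
      (G.mulVec c) ⬝ᵥ V.mulVec (G.mulVec c) + μ * (c ⬝ᵥ G.mulVec c)
          + 2 * (c ⬝ᵥ (G * V).mulVec x) + x ⬝ᵥ V.mulVec x
        ≥ x ⬝ᵥ ((V⁻¹ + μ⁻¹ • G)⁻¹).mulVec x) ∧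
    (∀ x : Fin n → ℝ, ∀ c : Fin n → ℝ, c = -((G + μ • V⁻¹)⁻¹).mulVec x →
      (G.mulVec c) ⬝ᵥ V.mulVec (G.mulVec c) + μ * (c ⬝ᵥ G.mulVec c)
          + 2 * (c ⬝ᵥ (G * V).mulVec x) + x ⬝ᵥ V.mulVec x
        = x ⬝ᵥ ((V⁻¹ + μ⁻¹ • G)⁻¹).mulVec x) := by
  have hGsym : Gᵀ = G := hG.isHermitian
  have hVsym : Vᵀ = V := hV.isHermitian
  have hVinv : (V⁻¹).PosDef := hV.inv
  have hsmul : (μ • V⁻¹).PosDef := by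
    refine ⟨?_, fun y hy => ?_⟩
    · show (μ • V⁻¹)ᴴ = μ • V⁻¹
      rw [conjTranspose_smul]
      rw [show (V⁻¹)ᴴ = V⁻¹ from hVinv.isHermitian]
      simp
    · exact (hVinv.smul hμ).2 hy
  set A := G + μ • V⁻¹ with hAdef
  have hA : A.PosDef := Matrix.PosDef.posSemidef_add hG hsmul
  have hAsym : Aᵀ = A := hA.isHermitian
  have hVdu : IsUnit V.det := (Matrix.isUnit_iff_isUnit_det V).mp hV.isUnit
  have hAdu : IsUnit A.det := (Matrix.isUnit_iff_isUnit_det A).mp hA.isUnit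
  have hVVinv : V * V⁻¹ = 1 := Matrix.mul_nonsing_inv V hVdu
  have hVinvV : V⁻¹ * V = 1 := Matrix.nonsing_inv_mul V hVdu
  have hAAinv : A * A⁻¹ = 1 := Matrix.mul_nonsing_inv A hAdu
  have hMdef : G * V * A = G * V * G + μ • G := by
    rw [hAdef, mul_add, Matrix.mul_smul, mul_assoc G V V⁻¹, hVVinv, mul_one]
  have hMsym : (G * V * G + μ • G)ᵀ = G * V * G + μ • G := by
    rw [transpose_add, transpose_smul, transpose_mul, transpose_mul, hGsym, hVsym, ← mul_assoc]
  have hW : (V⁻¹ + μ⁻¹ • G)⁻¹ = μ • A⁻¹ := by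
    have h1 : V⁻¹ + μ⁻¹ • G = μ⁻¹ • A := by
      rw [hAdef, smul_add, smul_smul, inv_mul_cancel₀ hμ.ne', one_smul, add_comm]
    rw [h1]
    apply Matrix.inv_eq_right_inv
    rw [Matrix.smul_mul, Matrix.mul_smul, hAAinv, smul_smul, inv_mul_cancel₀ hμ.ne', one_smul]
  have key : ∀ x c : Fin n → ℝ,
      (G.mulVec c) ⬝ᵥ V.mulVec (G.mulVec c) + μ * (c ⬝ᵥ G.mulVec c)
          + 2 * (c ⬝ᵥ (G * V).mulVec x) + x ⬝ᵥ V.mulVec x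
      = ((c + A⁻¹.mulVec x) ⬝ᵥ (G * V * G + μ • G).mulVec (c + A⁻¹.mulVec x))
          + x ⬝ᵥ ((V⁻¹ + μ⁻¹ • G)⁻¹).mulVec x := by
    intro x c
    set a := A⁻¹.mulVec x with ha
    have hax : A.mulVec a = x := by rw [ha, mulVec_mulVec, hAAinv, one_mulVec]
    have hMa : (G * V * G + μ • G).mulVec a = (G * V).mulVec x := by
      rw [← hMdef, ← mulVec_mulVec, hax]
    have e1 : (c + a) ⬝ᵥ (G * V * G + μ • G).mulVec (c + a)
        = c ⬝ᵥ (G * V * G + μ • G).mulVec c + 2 * (c ⬝ᵥ (G * V).mulVec x)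
            + a ⬝ᵥ (G * V).mulVec x := by
      rw [mulVec_add, dotProduct_add, add_dotProduct, add_dotProduct, hMa]
      have h2 : a ⬝ᵥ (G * V * G + μ • G).mulVec c = c ⬝ᵥ (G * V).mulVec x := by
        rw [symm_dot_swap _ hMsym, hMa, dotProduct_comm]
      rw [h2]; ring
    have e2 : c ⬝ᵥ (G * V * G + μ • G).mulVec c
        = (G.mulVec c) ⬝ᵥ V.mulVec (G.mulVec c) + μ * (c ⬝ᵥ G.mulVec c) := by
      rw [add_mulVec, dotProduct_add, smul_mulVec, dotProduct_smul, smul_eq_mul]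
      congr 1
      rw [← mulVec_mulVec, ← mulVec_mulVec, symm_dot_swap G hGsym]
    have e3 : x ⬝ᵥ V.mulVec x
        = a ⬝ᵥ (G * V).mulVec x + x ⬝ᵥ ((V⁻¹ + μ⁻¹ • G)⁻¹).mulVec x := by
      rw [hW]
      have h4 : a ⬝ᵥ A.mulVec (V.mulVec x) = x ⬝ᵥ V.mulVec x := by
        rw [symm_dot_swap A hAsym, hax]
      have h5 : A.mulVec (V.mulVec x) = (G * V).mulVec x + μ • x := by
        rw [hAdef, add_mulVec, smul_mulVec, mulVec_mulVec, mulVec_mulVec, hVinvV,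
          one_mulVec]
      rw [← h4, h5, dotProduct_add, dotProduct_smul, smul_mulVec, dotProduct_smul,
        smul_eq_mul, smul_eq_mul, dotProduct_comm a x]
    rw [e1, e2, e3]; ring
  constructor
  · intro x c
    rw [ge_iff_le, key x c]
    have h0 : 0 ≤ (c + A⁻¹.mulVec x) ⬝ᵥ (G * V * G + μ • G).mulVec (c + A⁻¹.mulVec x) := by
      set d := c + A⁻¹.mulVec x
      rw [add_mulVec, dotProduct_add, smul_mulVec, dotProduct_smul, smul_eq_mul,
        ← mulVec_mulVec, ← mulVec_mulVec, symm_dot_swap G hGsym]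
      have h1 : 0 ≤ (G.mulVec d) ⬝ᵥ V.mulVec (G.mulVec d) := by
        have := hV.posSemidef.dotProduct_mulVec_nonneg (G.mulVec d); simpa using this
      have h2 : 0 ≤ d ⬝ᵥ G.mulVec d := by
        have := hG.dotProduct_mulVec_nonneg d; simpa using this
      positivity
    linarith
  · intro x c hc
    rw [key x c, hc]
    simp
end

section
/- Core estimate of Lemma 2: let V be a symmetric positive definite n×n matrix, μ > 0, Q : [-h,0] → ℝ^{n×r} piecewise continuous, and G = ∫_{-h}^0 Q(θ)Q(θ)ᵀ dθ. Then for every x ∈ ℝⁿ and every piecewise continuous φ : [-h,0) → ℝʳ, (x + ∫_{-h}^0 Q(θ)φ(θ) dθ)ᵀ V (x + ∫_{-h}^0 Q(θ)φ(θ) dθ) + μ ∫_{-h}^0 ‖φ(θ)‖² dθ ≥ xᵀ (V⁻¹ + μ⁻¹ G)⁻¹ x. -/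
open scoped Matrix.Norms.L2Operator
open Matrix MeasureTheory

lemma pc_integrableOn {E : Type*} [NormedAddCommGroup E] [SecondCountableTopology E]
    {f : ℝ → E} {s : Set ℝ} (hf : PiecewiseContinuousOn f s) (hs : MeasurableSet s)
    (hvol : volume s < ⊤) : IntegrableOn f s volume := by
  obtain ⟨t, hc, C, hC⟩ := hf
  have ht0 : volume (t : Set ℝ) = 0 := t.finite_toSet.measure_zero _
  have hres : volume.restrict (s \ (t : Set ℝ)) = volume.restrict s :=
    Measure.restrict_congr_set (diff_ae_eq_self.mpr
      (measure_mono_null Set.inter_subset_right ht0))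
  have hcont : ContinuousOn f (s \ (t : Set ℝ)) := fun x hx => (hc x hx).mono Set.diff_subset
  have hmeas : AEStronglyMeasurable f (volume.restrict s) := by
    rw [← hres]
    exact hcont.aestronglyMeasurable (hs.diff t.finite_toSet.measurableSet)
  exact Integrable.mono' (integrableOn_const hvol.ne) hmeas
    ((ae_restrict_iff' hs).mpr (ae_of_all _ hC))

lemma cwa_matrix_of_entries {a b : ℕ} {F : ℝ → Matrix (Fin a) (Fin b) ℝ}
    {s : Set ℝ} {x : ℝ} (hF : ∀ i j, ContinuousWithinAt (fun θ => F θ i j) s x) :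
    ContinuousWithinAt F s x := by
  have hrw : F = fun θ => ∑ i : Fin a, ∑ j : Fin b, (F θ i j) • (Matrix.single i j (1:ℝ)) := by
    funext θ
    conv_lhs => rw [matrix_eq_sum_single (F θ)]
    refine Finset.sum_congr rfl fun i _ => Finset.sum_congr rfl fun j _ => ?_
    rw [smul_single, smul_eq_mul, mul_one]
  rw [hrw]
  exact tendsto_finset_sum _ fun i _ => tendsto_finset_sum _ fun j _ => (hF i j).smul_const _

noncomputable def entryCLM (a b : ℕ) (i : Fin a) (j : Fin b) :
    Matrix (Fin a) (Fin b) ℝ →L[ℝ] ℝ :=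
  LinearMap.toContinuousLinearMap
    { toFun := fun M => M i j, map_add' := fun _ _ => rfl, map_smul' := fun _ _ => rfl }

lemma cwa_entry {a b : ℕ} {F : ℝ → Matrix (Fin a) (Fin b) ℝ} {s : Set ℝ} {x : ℝ}
    (hF : ContinuousWithinAt F s x) (i : Fin a) (j : Fin b) :
    ContinuousWithinAt (fun θ => F θ i j) s x :=
  ((entryCLM a b i j).continuous.continuousAt).comp_continuousWithinAt hF

lemma euclid_apply_le {a : ℕ} (v : EuclideanSpace ℝ (Fin a)) (i : Fin a) : |v i| ≤ ‖v‖ := by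
  rw [EuclideanSpace.norm_eq]
  calc |v i| = Real.sqrt (‖v i‖^2) := by
        rw [Real.sqrt_sq (norm_nonneg _)]; exact (Real.norm_eq_abs _).symm
    _ ≤ Real.sqrt (∑ j, ‖v j‖^2) :=
        Real.sqrt_le_sqrt (Finset.single_le_sum (fun j _ => sq_nonneg ‖v j‖) (Finset.mem_univ i))

lemma abs_entry_le_l2_opNorm {a b : ℕ} (M : Matrix (Fin a) (Fin b) ℝ) (i : Fin a) (j : Fin b) :
    |M i j| ≤ ‖M‖ := by
  have h1 := M.l2_opNorm_mulVec (EuclideanSpace.single j (1:ℝ))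
  rw [EuclideanSpace.norm_single, norm_one, mul_one] at h1
  have h2 : ((EuclideanSpace.equiv (Fin a) ℝ).symm (M *ᵥ (EuclideanSpace.single j (1:ℝ)))) i
      = M i j := by
    simp [Matrix.mulVec, dotProduct, EuclideanSpace.single_apply]
  calc |M i j| = ‖((EuclideanSpace.equiv (Fin a) ℝ).symm
        (M *ᵥ (EuclideanSpace.single j (1:ℝ)))) i‖ := by rw [h2]; simp
    _ ≤ ‖(EuclideanSpace.equiv (Fin a) ℝ).symm (M *ᵥ (EuclideanSpace.single j (1:ℝ)))‖ :=
        euclid_apply_le _ i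
    _ ≤ ‖M‖ := h1

lemma dot_self_nonneg' {a : ℕ} (v : Fin a → ℝ) : 0 ≤ v ⬝ᵥ v :=
  Finset.sum_nonneg fun i _ => mul_self_nonneg (v i)

lemma dot_mulVec_eq {a b : ℕ} (M : Matrix (Fin a) (Fin b) ℝ) (v : Fin a → ℝ) (w : Fin b → ℝ) :
    v ⬝ᵥ (M *ᵥ w) = (Mᵀ *ᵥ v) ⬝ᵥ w := by
  rw [Matrix.dotProduct_mulVec, Matrix.mulVec_transpose]

noncomputable def dotCLM {a : ℕ} (z : Fin a → ℝ) : (Fin a → ℝ) →L[ℝ] ℝ :=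
  LinearMap.toContinuousLinearMap
    { toFun := fun v => z ⬝ᵥ v
      map_add' := fun v w => dotProduct_add z v w
      map_smul' := fun c v => by simp [dotProduct_smul, smul_eq_mul] }

@[simp] lemma dotCLM_apply {a : ℕ} (z v : Fin a → ℝ) : dotCLM z v = z ⬝ᵥ v := rfl

noncomputable def quadCLM {a b : ℕ} (v : Fin a → ℝ) (w : Fin b → ℝ) :
    Matrix (Fin a) (Fin b) ℝ →L[ℝ] ℝ :=
  LinearMap.toContinuousLinearMap
    { toFun := fun M => v ⬝ᵥ (M *ᵥ w)
      map_add' := fun M N => by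
        show v ⬝ᵥ ((M + N) *ᵥ w) = v ⬝ᵥ (M *ᵥ w) + v ⬝ᵥ (N *ᵥ w)
        rw [Matrix.add_mulVec, dotProduct_add]
      map_smul' := fun c M => by
        show v ⬝ᵥ ((c • M) *ᵥ w) = c • (v ⬝ᵥ (M *ᵥ w))
        rw [Matrix.smul_mulVec, dotProduct_smul] }

@[simp] lemma quadCLM_apply {a b : ℕ} (v : Fin a → ℝ) (w : Fin b → ℝ)
    (M : Matrix (Fin a) (Fin b) ℝ) : quadCLM v w M = v ⬝ᵥ (M *ᵥ w) := rfl

/-- Core estimate of Lemma 2: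
`(x + ∫Qφ)ᵀ V (x + ∫Qφ) + μ ∫‖φ‖² ≥ xᵀ (V⁻¹ + μ⁻¹G)⁻¹ x` with `G = ∫ Q Qᵀ`. -/
theorem lyapunov_lower_bound_core_estimate
    {n r : ℕ} (h : ℝ) (hh : 0 < h)
    (V : Matrix (Fin n) (Fin n) ℝ) (hV : V.PosDef)
    (μ : ℝ) (hμ : 0 < μ)
    (Q : ℝ → Matrix (Fin n) (Fin r) ℝ)
    (hQ : PiecewiseContinuousOn Q (Set.Icc (-h) 0))
    (G : Matrix (Fin n) (Fin n) ℝ) (hG : G = ∫ θ in (-h)..0, Q θ * (Q θ)ᵀ) :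
    ∀ (x : Fin n → ℝ) (φ : ℝ → Fin r → ℝ),
      PiecewiseContinuousOn φ (Set.Ico (-h) 0) →
      (x + ∫ θ in (-h)..0, (Q θ).mulVec (φ θ)) ⬝ᵥ
          V.mulVec (x + ∫ θ in (-h)..0, (Q θ).mulVec (φ θ))
        + μ * ∫ θ in (-h)..0, φ θ ⬝ᵥ φ θ
      ≥ x ⬝ᵥ ((V⁻¹ + μ⁻¹ • G)⁻¹).mulVec x := by
  intro x φ hφ
  have hle : (-h) ≤ (0:ℝ) := by linarith
  set S : Set ℝ := Set.Ioc (-h) 0 with hSdef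
  have hIccvol : volume (Set.Icc (-h) 0) < ⊤ := isCompact_Icc.measure_lt_top
  have hIcovol : volume (Set.Ico (-h) 0) < ⊤ :=
    lt_of_le_of_lt (measure_mono Set.Ico_subset_Icc_self) hIccvol
  have hIoc_Ico : S =ᵐ[volume] Set.Ico (-h) 0 := Ioc_ae_eq_Icc.trans Ico_ae_eq_Icc.symm
  obtain ⟨tQ, hQc, CQ, hQC⟩ := hQ
  obtain ⟨tφ, hφc, Cφ, hφC⟩ := hφ
  have hCQ0 : 0 ≤ CQ := le_trans (norm_nonneg _) (hQC (-h) ⟨le_refl _, hle⟩)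
  have hCφ0 : 0 ≤ Cφ := le_trans (norm_nonneg _) (hφC (-h) ⟨le_refl _, by linarith⟩)
  have hQe : ∀ θ ∈ Set.Icc (-h) 0, ∀ i j, |Q θ i j| ≤ CQ := fun θ hθ i j =>
    (abs_entry_le_l2_opNorm _ i j).trans (hQC θ hθ)
  have hφe : ∀ θ ∈ Set.Ico (-h) 0, ∀ j, |φ θ j| ≤ Cφ := fun θ hθ j => by
    have := norm_le_pi_norm (φ θ) j
    simpa [Real.norm_eq_abs] using this.trans (hφC θ hθ)
  -- integrability of f1 θ = Q θ *ᵥ φ θ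
  have hf1 : PiecewiseContinuousOn (fun θ => (Q θ) *ᵥ (φ θ)) (Set.Ico (-h) 0) := by
    refine ⟨tQ ∪ tφ, fun θ hθ => ?_, (r : ℝ) * (CQ * Cφ), fun θ hθ => ?_⟩
    · have h2 := hθ.2
      rw [Finset.coe_union] at h2
      have hQx : ContinuousWithinAt Q (Set.Ico (-h) 0) θ :=
        (hQc θ ⟨Set.Ico_subset_Icc_self hθ.1, fun hc => h2 (Set.mem_union_left _ hc)⟩).mono
          Set.Ico_subset_Icc_self
      have hφx : ContinuousWithinAt φ (Set.Ico (-h) 0) θ :=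
        hφc θ ⟨hθ.1, fun hc => h2 (Set.mem_union_right _ hc)⟩
      rw [continuousWithinAt_pi]
      intro i
      have hcoord : (fun θ => ((Q θ) *ᵥ (φ θ)) i) = fun θ => ∑ j, Q θ i j * φ θ j := rfl
      rw [hcoord]
      exact tendsto_finset_sum _ fun j _ =>
        (cwa_entry hQx i j).mul
          (((continuous_apply j).continuousAt).comp_continuousWithinAt hφx)
    · rw [pi_norm_le_iff_of_nonneg (by positivity)]
      intro i
      rw [Real.norm_eq_abs]
      calc |((Q θ) *ᵥ (φ θ)) i| = |∑ j, Q θ i j * φ θ j| := rfl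
        _ ≤ ∑ j, |Q θ i j * φ θ j| := Finset.abs_sum_le_sum_abs _ _
        _ ≤ ∑ _j : Fin r, CQ * Cφ := Finset.sum_le_sum fun j _ => by
              rw [abs_mul]
              exact mul_le_mul (hQe θ (Set.Ico_subset_Icc_self hθ) i j)
                (hφe θ hθ j) (abs_nonneg _) hCQ0
        _ = (r : ℝ) * (CQ * Cφ) := by simp [Finset.sum_const, nsmul_eq_mul]
  have i1 : IntegrableOn (fun θ => (Q θ) *ᵥ (φ θ)) S volume :=
    (pc_integrableOn hf1 measurableSet_Ico hIcovol).congr_set_ae hIoc_Ico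
  -- integrability of f2 θ = φ θ ⬝ᵥ φ θ
  have hf2 : PiecewiseContinuousOn (fun θ => φ θ ⬝ᵥ φ θ) (Set.Ico (-h) 0) := by
    refine ⟨tφ, fun θ hθ => ?_, (r : ℝ) * (Cφ * Cφ), fun θ hθ => ?_⟩
    · have hφx : ContinuousWithinAt φ (Set.Ico (-h) 0) θ := hφc θ hθ
      have hcoord : (fun θ => φ θ ⬝ᵥ φ θ) = fun θ => ∑ j, φ θ j * φ θ j := rfl
      rw [hcoord]
      exact tendsto_finset_sum _ fun j _ =>
        (((continuous_apply j).continuousAt).comp_continuousWithinAt hφx).mul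
          (((continuous_apply j).continuousAt).comp_continuousWithinAt hφx)
    · rw [Real.norm_eq_abs]
      calc |φ θ ⬝ᵥ φ θ| = |∑ j, φ θ j * φ θ j| := rfl
        _ ≤ ∑ j, |φ θ j * φ θ j| := Finset.abs_sum_le_sum_abs _ _
        _ ≤ ∑ _j : Fin r, Cφ * Cφ := Finset.sum_le_sum fun j _ => by
              rw [abs_mul]
              exact mul_le_mul (hφe θ hθ j) (hφe θ hθ j) (abs_nonneg _) hCφ0
        _ = (r : ℝ) * (Cφ * Cφ) := by simp [Finset.sum_const, nsmul_eq_mul]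
  have i2 : IntegrableOn (fun θ => φ θ ⬝ᵥ φ θ) S volume :=
    (pc_integrableOn hf2 measurableSet_Ico hIcovol).congr_set_ae hIoc_Ico
  -- integrability of f3 θ = Q θ * (Q θ)ᵀ
  have hQtnorm : ∀ θ, ‖(Q θ)ᵀ‖ = ‖Q θ‖ := fun θ => by
    rw [← Matrix.conjTranspose_eq_transpose_of_trivial, Matrix.l2_opNorm_conjTranspose]
  have hf3 : PiecewiseContinuousOn (fun θ => Q θ * (Q θ)ᵀ) (Set.Icc (-h) 0) := by
    refine ⟨tQ, fun θ hθ => ?_, CQ * CQ, fun θ hθ => ?_⟩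
    · have hQx : ContinuousWithinAt Q (Set.Icc (-h) 0) θ := hQc θ hθ
      refine cwa_matrix_of_entries fun i k => ?_
      have hcoord : (fun θ => (Q θ * (Q θ)ᵀ) i k) = fun θ => ∑ j, Q θ i j * Q θ k j := by
        funext θ; simp [Matrix.mul_apply, Matrix.transpose_apply]
      rw [hcoord]
      exact tendsto_finset_sum _ fun j _ => (cwa_entry hQx i j).mul (cwa_entry hQx k j)
    · calc ‖Q θ * (Q θ)ᵀ‖ ≤ ‖Q θ‖ * ‖(Q θ)ᵀ‖ := Matrix.l2_opNorm_mul _ _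
        _ = ‖Q θ‖ * ‖Q θ‖ := by rw [hQtnorm]
        _ ≤ CQ * CQ := mul_le_mul (hQC θ hθ) (hQC θ hθ) (norm_nonneg _) hCQ0
  have i3 : IntegrableOn (fun θ => Q θ * (Q θ)ᵀ) S volume :=
    (pc_integrableOn hf3 measurableSet_Icc hIccvol).mono_set Set.Ioc_subset_Icc_self
  -- derived integrabilities
  have i4 : ∀ z : Fin n → ℝ, IntegrableOn (fun θ => z ⬝ᵥ ((Q θ) *ᵥ (φ θ))) S volume :=
    fun z => (dotCLM z).integrable_comp i1
  have i5 : ∀ v : Fin n → ℝ,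
      IntegrableOn (fun θ => v ⬝ᵥ ((Q θ * (Q θ)ᵀ) *ᵥ v)) S volume :=
    fun v => (quadCLM v v).integrable_comp i3
  -- quadratic form of G as an integral
  have hGq : ∀ v : Fin n → ℝ,
      v ⬝ᵥ (G *ᵥ v) = ∫ θ in S, v ⬝ᵥ ((Q θ * (Q θ)ᵀ) *ᵥ v) := by
    intro v
    rw [hG, intervalIntegral.integral_of_le hle]
    exact ((quadCLM v v).integral_comp_comm i3).symm
  have hGpsd : ∀ v : Fin n → ℝ, 0 ≤ v ⬝ᵥ (G *ᵥ v) := by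
    intro v
    rw [hGq v]
    refine setIntegral_nonneg measurableSet_Ioc fun θ _ => ?_
    rw [← Matrix.mulVec_mulVec, dot_mulVec_eq]
    exact dot_self_nonneg' _
  -- invertibility of A = V⁻¹ + μ⁻¹ • G
  have hVinv := hV.inv
  have hAdet : (V⁻¹ + μ⁻¹ • G).det ≠ 0 := by
    intro h0
    obtain ⟨v, hv0, hAv⟩ := Matrix.exists_mulVec_eq_zero_iff.mpr h0
    have h1 : 0 < v ⬝ᵥ (V⁻¹ *ᵥ v) := by
      have := hVinv.dotProduct_mulVec_pos hv0
      simpa using this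
    have h2 : 0 ≤ μ⁻¹ * (v ⬝ᵥ (G *ᵥ v)) := mul_nonneg (by positivity) (hGpsd v)
    have h3 : v ⬝ᵥ ((V⁻¹ + μ⁻¹ • G) *ᵥ v)
        = v ⬝ᵥ (V⁻¹ *ᵥ v) + μ⁻¹ * (v ⬝ᵥ (G *ᵥ v)) := by
      rw [Matrix.add_mulVec, dotProduct_add, Matrix.smul_mulVec,
        dotProduct_smul, smul_eq_mul]
    rw [hAv] at h3
    simp only [dotProduct_zero] at h3
    linarith
  set z : Fin n → ℝ := (V⁻¹ + μ⁻¹ • G)⁻¹ *ᵥ x with hzdef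
  have hAz : (V⁻¹ + μ⁻¹ • G) *ᵥ z = x := by
    rw [hzdef, Matrix.mulVec_mulVec, Matrix.mul_nonsing_inv _ (isUnit_iff_ne_zero.mpr hAdet),
      Matrix.one_mulVec]
  set y : Fin n → ℝ := ∫ θ in (-h)..0, (Q θ) *ᵥ (φ θ) with hydef
  have hzy : z ⬝ᵥ y = ∫ θ in S, z ⬝ᵥ ((Q θ) *ᵥ (φ θ)) := by
    rw [hydef, intervalIntegral.integral_of_le hle]
    exact ((dotCLM z).integral_comp_comm i1).symm
  -- quadratic inequality for V
  have hVsym : Vᵀ = V := by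
    rw [← Matrix.conjTranspose_eq_transpose_of_trivial]; exact hV.1
  have hVu : V *ᵥ (V⁻¹ *ᵥ z) = z := by
    rw [Matrix.mulVec_mulVec, Matrix.mul_nonsing_inv _ hV.det_pos.ne'.isUnit,
      Matrix.one_mulVec]
  have hsymdot : ∀ u w : Fin n → ℝ, u ⬝ᵥ (V *ᵥ w) = (V *ᵥ u) ⬝ᵥ w := fun u w => by
    rw [dot_mulVec_eq, hVsym]
  have h0 : 0 ≤ ((x + y) - V⁻¹ *ᵥ z) ⬝ᵥ (V *ᵥ ((x + y) - V⁻¹ *ᵥ z)) := by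
    simpa using hV.posSemidef.dotProduct_mulVec_nonneg ((x + y) - V⁻¹ *ᵥ z)
  have e1 : ((x + y) - V⁻¹ *ᵥ z) ⬝ᵥ (V *ᵥ ((x + y) - V⁻¹ *ᵥ z))
      = (x + y) ⬝ᵥ (V *ᵥ (x + y)) - 2*(z ⬝ᵥ (x + y)) + z ⬝ᵥ (V⁻¹ *ᵥ z) := by
    rw [Matrix.mulVec_sub, hVu, sub_dotProduct, dotProduct_sub,
      dotProduct_sub, hsymdot (V⁻¹ *ᵥ z) (x + y), hVu,
      dotProduct_comm (x + y) z, dotProduct_comm (V⁻¹ *ᵥ z) z]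
    ring
  have I1 : 2*(z ⬝ᵥ (x + y)) - z ⬝ᵥ (V⁻¹ *ᵥ z) ≤ (x + y) ⬝ᵥ (V *ᵥ (x + y)) := by
    rw [e1] at h0; linarith
  -- pointwise inequality and integration
  have hP : ∀ θ : ℝ, (-2)*(z ⬝ᵥ ((Q θ) *ᵥ (φ θ))) + (-μ⁻¹)*(z ⬝ᵥ ((Q θ * (Q θ)ᵀ) *ᵥ z))
      ≤ μ * (φ θ ⬝ᵥ φ θ) := by
    intro θ
    set p : Fin r → ℝ := φ θ with hp
    set u : Fin r → ℝ := (Q θ)ᵀ *ᵥ z with hu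
    have e2 : z ⬝ᵥ ((Q θ) *ᵥ p) = u ⬝ᵥ p := dot_mulVec_eq _ _ _
    have e3 : z ⬝ᵥ ((Q θ * (Q θ)ᵀ) *ᵥ z) = u ⬝ᵥ u := by
      rw [← Matrix.mulVec_mulVec, dot_mulVec_eq]
    have hS0 : 0 ≤ (p + μ⁻¹ • u) ⬝ᵥ (p + μ⁻¹ • u) := dot_self_nonneg' _
    have hexp : (p + μ⁻¹ • u) ⬝ᵥ (p + μ⁻¹ • u)
        = p ⬝ᵥ p + 2*μ⁻¹*(u ⬝ᵥ p) + μ⁻¹*μ⁻¹*(u ⬝ᵥ u) := by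
      rw [add_dotProduct, dotProduct_add, dotProduct_add,
        smul_dotProduct, dotProduct_smul, smul_dotProduct,
        dotProduct_smul, dotProduct_comm p u]
      simp only [smul_eq_mul]
      ring
    rw [hexp] at hS0
    have hkey : 0 ≤ μ*(p ⬝ᵥ p) + 2*(u ⬝ᵥ p) + μ⁻¹*(u ⬝ᵥ u) := by
      have hmul := mul_nonneg hμ.le hS0
      have heq : μ * (p ⬝ᵥ p + 2*μ⁻¹*(u ⬝ᵥ p) + μ⁻¹*μ⁻¹*(u ⬝ᵥ u))
          = μ*(p ⬝ᵥ p) + 2*(u ⬝ᵥ p) + μ⁻¹*(u ⬝ᵥ u) := by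
        field_simp
      rw [heq] at hmul
      exact hmul
    rw [e2, e3]
    linarith
  have hint : ∫ θ in S, ((-2)*(z ⬝ᵥ ((Q θ) *ᵥ (φ θ)))
        + (-μ⁻¹)*(z ⬝ᵥ ((Q θ * (Q θ)ᵀ) *ᵥ z)))
      ≤ ∫ θ in S, μ * (φ θ ⬝ᵥ φ θ) :=
    integral_mono (((i4 z).const_mul _).add ((i5 z).const_mul _)) (i2.const_mul _)
      fun θ => hP θ
  rw [integral_add ((i4 z).const_mul _) ((i5 z).const_mul _), integral_const_mul,
    integral_const_mul, integral_const_mul, ← hzy, ← hGq z] at hint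
  -- assemble
  have hF2 : (∫ θ in (-h)..0, φ θ ⬝ᵥ φ θ) = ∫ θ in S, φ θ ⬝ᵥ φ θ :=
    intervalIntegral.integral_of_le hle
  have hzx : z ⬝ᵥ x = z ⬝ᵥ (V⁻¹ *ᵥ z) + μ⁻¹*(z ⬝ᵥ (G *ᵥ z)) := by
    conv_lhs => rw [← hAz]
    rw [Matrix.add_mulVec, dotProduct_add, Matrix.smul_mulVec,
      dotProduct_smul, smul_eq_mul]
  have hgoal : x ⬝ᵥ (((V⁻¹ + μ⁻¹ • G)⁻¹) *ᵥ x) = z ⬝ᵥ x := by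
    rw [← hzdef, dotProduct_comm]
  rw [ge_iff_le]
  show x ⬝ᵥ (((V⁻¹ + μ⁻¹ • G)⁻¹) *ᵥ x)
      ≤ (x + y) ⬝ᵥ (V *ᵥ (x + y)) + μ * ∫ θ in (-h)..0, φ θ ⬝ᵥ φ θ
  rw [hgoal, hF2]
  have hdotadd : z ⬝ᵥ (x + y) = z ⬝ᵥ x + z ⬝ᵥ y := dotProduct_add _ _ _
  linarith [I1, hint, hzx, hdotadd]
end

section
/- L² estimate of the kernel mismatch for a single discrete input delay (inequality (63) in the proof of Corollary 1): let A ∈ ℝ^{n×n} with A ≠ 0, B ∈ ℝ^{n×r}, δ ≥ 0, δ̂ ≥ 0, and h = max{δ, δ̂}. Define Q(θ) = e^{-A(δ+θ)}B for θ ∈ [-δ, 0] and Q(θ) = 0 for θ ∈ [-h, -δ), and Q̂(θ) = e^{-A(δ̂+θ)}B for θ ∈ [-δ̂, 0] and Q̂(θ) = 0 for θ ∈ [-h, -δ̂). Then ∫_{-h}^0 ‖Q̂(θ) - Q(θ)‖² dθ ≤ (‖B‖²/(2‖A‖)) ( e^{2‖A‖|δ̂-δ|} - 1 ) + (‖B‖²/(2‖A‖))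 ( e^{2‖A‖h} - 1 ) ( e^{‖A‖|δ̂-δ|} - 1 )². -/
open scoped Matrix.Norms.L2Operator
open Matrix MeasureTheory

theorem my_norm_exp_sub_one_le {𝔸 : Type*} [NormedRing 𝔸] [NormedAlgebra ℝ 𝔸] [CompleteSpace 𝔸] (x : 𝔸) :
    ‖NormedSpace.exp x - 1‖ ≤ Real.exp ‖x‖ - 1 := by
  have hs : Summable fun n : ℕ => ((n.factorial : ℝ))⁻¹ • x ^ n :=
    NormedSpace.expSeries_summable' x
  have hsr : Summable fun n : ℕ => ‖x‖ ^ n / n.factorial :=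
    NormedSpace.expSeries_div_summable ‖x‖
  have hre : Real.exp ‖x‖ = ∑' n : ℕ, ‖x‖ ^ n / n.factorial := by
    rw [Real.exp_eq_exp_ℝ, NormedSpace.exp_eq_tsum_div]
  rw [NormedSpace.exp_eq_tsum ℝ]
  show ‖(∑' n : ℕ, ((n.factorial : ℝ))⁻¹ • x ^ n) - 1‖ ≤ _
  rw [Summable.tsum_eq_zero_add hs]
  simp only [pow_zero, Nat.factorial_zero, Nat.cast_one, inv_one, one_smul, add_sub_cancel_left]
  have hb : ∀ n : ℕ, ‖((n + 1).factorial : ℝ)⁻¹ • x ^ (n + 1)‖ ≤ ‖x‖ ^ (n + 1) / (n + 1).factorial := by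
    intro n
    rw [norm_smul, Real.norm_eq_abs, abs_of_nonneg (by positivity), div_eq_inv_mul]
    exact mul_le_mul_of_nonneg_left (norm_pow_le' x n.succ_pos) (by positivity)
  have hgs : Summable fun n : ℕ => ‖x‖ ^ (n + 1) / (n + 1).factorial :=
    (summable_nat_add_iff 1).mpr hsr
  have : Real.exp ‖x‖ - 1 = ∑' n : ℕ, ‖x‖ ^ (n + 1) / (n + 1).factorial := by
    rw [hre, Summable.tsum_eq_zero_add hsr]
    simp
  rw [this]
  exact tsum_of_norm_bounded hgs.hasSum hb

theorem my_norm_exp_le {𝔸 : Type*} [NormedRing 𝔸] [NormedAlgebra ℝ 𝔸] [CompleteSpace 𝔸]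
    (h1 : ‖(1 : 𝔸)‖ ≤ 1) (x : 𝔸) : ‖NormedSpace.exp x‖ ≤ Real.exp ‖x‖ := by
  calc ‖NormedSpace.exp x‖ = ‖NormedSpace.exp x - 1 + 1‖ := by rw [sub_add_cancel]
    _ ≤ ‖NormedSpace.exp x - 1‖ + ‖(1 : 𝔸)‖ := norm_add_le _ _
    _ ≤ (Real.exp ‖x‖ - 1) + 1 := add_le_add (my_norm_exp_sub_one_le x) h1
    _ = Real.exp ‖x‖ := by ring

theorem matrix_norm_one_le {n : ℕ} : ‖(1 : Matrix (Fin n) (Fin n) ℝ)‖ ≤ 1 := by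
  rw [Matrix.cstar_norm_def, _root_.map_one]
  exact ContinuousLinearMap.norm_id_le

theorem aux_diff {n r : ℕ} (A : Matrix (Fin n) (Fin n) ℝ) (B : Matrix (Fin n) (Fin r) ℝ)
    {s t : ℝ} (hs : 0 ≤ s) (hst : s ≤ t) :
    ‖NormedSpace.exp ((-t) • A) * B - NormedSpace.exp ((-s) • A) * B‖
      ≤ Real.exp (‖A‖ * s) * (Real.exp (‖A‖ * (t - s)) - 1) * ‖B‖ := by
  haveI : CompleteSpace (Matrix (Fin n) (Fin n) ℝ) := FiniteDimensional.complete ℝ _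
  have hcomm : Commute ((-s) • A) ((-(t - s)) • A) :=
    (Commute.refl A).smul_left _ |>.smul_right _
  have hfac : NormedSpace.exp ((-t) • A)
      = NormedSpace.exp ((-s) • A) * NormedSpace.exp ((-(t - s)) • A) := by
    rw [← Matrix.exp_add_of_commute _ _ hcomm, ← add_smul]
    ring_nf
  have key : NormedSpace.exp ((-t) • A) * B - NormedSpace.exp ((-s) • A) * B
      = NormedSpace.exp ((-s) • A) * ((NormedSpace.exp ((-(t - s)) • A) - 1) * B) := by
    rw [hfac, Matrix.mul_assoc, ← Matrix.mul_sub, Matrix.sub_mul, Matrix.one_mul]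
  rw [key]
  calc ‖NormedSpace.exp ((-s) • A) * ((NormedSpace.exp ((-(t - s)) • A) - 1) * B)‖
      ≤ ‖NormedSpace.exp ((-s) • A)‖ * ‖(NormedSpace.exp ((-(t - s)) • A) - 1) * B‖ :=
        l2_opNorm_mul _ _
    _ ≤ ‖NormedSpace.exp ((-s) • A)‖ * (‖NormedSpace.exp ((-(t - s)) • A) - 1‖ * ‖B‖) :=
        mul_le_mul_of_nonneg_left (l2_opNorm_mul _ _) (norm_nonneg _)
    _ ≤ Real.exp (‖A‖ * s) * ((Real.exp (‖A‖ * (t - s)) - 1) * ‖B‖) := by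
        have h1 : ‖NormedSpace.exp ((-s) • A)‖ ≤ Real.exp (‖A‖ * s) := by
          refine (my_norm_exp_le matrix_norm_one_le _).trans ?_
          rw [norm_smul, Real.norm_eq_abs, abs_neg, abs_of_nonneg hs, mul_comm]
        have h2 : ‖NormedSpace.exp ((-(t - s)) • A) - 1‖ ≤ Real.exp (‖A‖ * (t - s)) - 1 := by
          refine (my_norm_exp_sub_one_le _).trans ?_
          rw [norm_smul, Real.norm_eq_abs, abs_neg, abs_of_nonneg (by linarith), mul_comm]
        have hb2 : (0:ℝ) ≤ Real.exp (‖A‖ * (t - s)) - 1 := by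
          have := Real.one_le_exp
            (mul_nonneg (norm_nonneg A) (by linarith) : (0:ℝ) ≤ ‖A‖ * (t - s))
          linarith
        refine mul_le_mul h1 (mul_le_mul_of_nonneg_right h2 (norm_nonneg _)) ?_ (Real.exp_pos _).le
        positivity
    _ = Real.exp (‖A‖ * s) * (Real.exp (‖A‖ * (t - s)) - 1) * ‖B‖ := by ring

theorem integral_exp_aff (a c d H : ℝ) (ha : a ≠ 0) :
    ∫ θ in c..d, Real.exp (2*a*(H+θ))
      = (Real.exp (2*a*(H+d)) - Real.exp (2*a*(H+c))) / (2*a) := by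
  have hd : ∀ θ : ℝ, HasDerivAt (fun θ => Real.exp (2*a*(H+θ)) / (2*a))
      (Real.exp (2*a*(H+θ))) θ := by
    intro θ
    have h1 : HasDerivAt (fun θ : ℝ => 2*a*(H+θ)) (2*a) θ := by
      simpa using (((hasDerivAt_id θ).const_add H).const_mul (2*a))
    have := ((Real.hasDerivAt_exp (2*a*(H+θ))).comp θ h1).div_const (2*a)
    rw [mul_div_cancel_right₀ _ (mul_ne_zero two_ne_zero ha)] at this
    exact this
  rw [intervalIntegral.integral_eq_sub_of_hasDerivAt (fun θ _ => hd θ)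
    (Continuous.intervalIntegrable (by continuity) _ _)]
  ring

/-- L² estimate of the kernel mismatch for a single discrete input delay
(inequality (63) in the proof of Corollary 1). -/
theorem kernel_mismatch_L2_estimate
    {n r : ℕ}
    (A : Matrix (Fin n) (Fin n) ℝ) (hA : A ≠ 0)
    (B : Matrix (Fin n) (Fin r) ℝ)
    (δ δh : ℝ) (hδ : 0 ≤ δ) (hδh : 0 ≤ δh)
    (h : ℝ) (hh : h = max δ δh)
    (Q Qh : ℝ → Matrix (Fin n) (Fin r) ℝ)
    (hQ : ∀ θ ∈ Set.Icc (-h) 0,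
      Q θ = if -δ ≤ θ then NormedSpace.exp ((-(δ + θ)) • A) * B else 0)
    (hQh : ∀ θ ∈ Set.Icc (-h) 0,
      Qh θ = if -δh ≤ θ then NormedSpace.exp ((-(δh + θ)) • A) * B else 0) :
    (∫ θ in (-h)..0, ‖Qh θ - Q θ‖ ^ 2)
      ≤ ‖B‖ ^ 2 / (2 * ‖A‖) * (Real.exp (2 * ‖A‖ * |δh - δ|) - 1)
        + ‖B‖ ^ 2 / (2 * ‖A‖) * (Real.exp (2 * ‖A‖ * h) - 1) *
            (Real.exp (‖A‖ * |δh - δ|) - 1) ^ 2 := by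
  haveI : CompleteSpace (Matrix (Fin n) (Fin n) ℝ) := FiniteDimensional.complete ℝ _
  have ha : (0:ℝ) < ‖A‖ := norm_pos_iff.mpr hA
  set a := ‖A‖ with haa
  set m := min δ δh with hm
  have hm0 : 0 ≤ m := le_min hδ hδh
  have hmh : m ≤ h := hh ▸ min_le_max
  have hΔ : h - m = |δh - δ| := by
    rw [hh, hm]; exact max_sub_min_eq_abs δ δh
  have hΔ0 : 0 ≤ |δh - δ| := abs_nonneg _
  have hh0 : 0 ≤ h := hm0.trans hmh
  have hδhh : δh ≤ h := hh ▸ le_max_right δ δh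
  have hδheight : δ ≤ h := hh ▸ le_max_left δ δh
  set E := Real.exp (a * |δh - δ|) - 1 with hE
  have hE0 : 0 ≤ E := by
    rw [hE]
    have := Real.one_le_exp (mul_nonneg ha.le hΔ0)
    linarith
  set f : ℝ → Matrix (Fin n) (Fin r) ℝ :=
    fun θ => if -δ ≤ θ then NormedSpace.exp ((-(δ + θ)) • A) * B else 0 with hf
  set fh : ℝ → Matrix (Fin n) (Fin r) ℝ :=
    fun θ => if -δh ≤ θ then NormedSpace.exp ((-(δh + θ)) • A) * B else 0 with hfh
  -- replace Q, Qh by explicit formulas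
  have hcong : (∫ θ in (-h)..0, ‖Qh θ - Q θ‖ ^ 2) = ∫ θ in (-h)..0, ‖fh θ - f θ‖ ^ 2 := by
    apply intervalIntegral.integral_congr
    intro θ hθ
    rw [Set.uIcc_of_le (by linarith : -h ≤ (0:ℝ))] at hθ
    simp only [hQ θ hθ, hQh θ hθ, hf, hfh]
  rw [hcong]
  -- key estimate when both exponentials are present
  have key : ∀ θ : ℝ, -m ≤ θ →
      ‖NormedSpace.exp ((-(δh + θ)) • A) * B - NormedSpace.exp ((-(δ + θ)) • A) * B‖
        ≤ Real.exp (a * (m + θ)) * E * ‖B‖ := by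
    intro θ hθ
    rcases le_total δ δh with hc | hc
    · have hmδ : m = δ := min_eq_left hc
      have h1 := aux_diff A B (s := δ + θ) (t := δh + θ)
        (by rw [hmδ] at hθ; linarith) (by linarith)
      refine h1.trans (le_of_eq ?_)
      rw [hmδ, hE, show δh + θ - (δ + θ) = δh - δ from by ring,
        abs_of_nonneg (sub_nonneg.mpr hc)]
    · have hmδ : m = δh := min_eq_right hc
      rw [norm_sub_rev]
      have h1 := aux_diff A B (s := δh + θ) (t := δ + θ)
        (by rw [hmδ] at hθ; linarith) (by linarith)
      refine h1.trans (le_of_eq ?_)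
      rw [hmδ, hE, show δ + θ - (δh + θ) = δ - δh from by ring,
        abs_sub_comm δh δ, abs_of_nonneg (sub_nonneg.mpr hc)]
  -- bound valid on all of [-h, 0]
  have claim1 : ∀ θ ∈ Set.Icc (-h) (0:ℝ), ‖fh θ - f θ‖ ≤ ‖B‖ * Real.exp (a * (h + θ)) := by
    rintro θ ⟨h1, h2⟩
    simp only [hf, hfh]
    split_ifs with c1 c2 c2
    · have hmθ : -m ≤ θ := by
        have : -θ ≤ m := le_min (by linarith) (by linarith)
        linarith
      refine (key θ hmθ).trans ?_
      have e1 : Real.exp (a * (m + θ)) * Real.exp (a * |δh - δ|) = Real.exp (a * (h + θ)) := by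
        rw [← Real.exp_add]; congr 1; rw [← hΔ]; ring
      calc Real.exp (a * (m + θ)) * E * ‖B‖
          ≤ Real.exp (a * (m + θ)) * Real.exp (a * |δh - δ|) * ‖B‖ := by
            have : E ≤ Real.exp (a * |δh - δ|) := by rw [hE]; linarith
            exact mul_le_mul_of_nonneg_right
              (mul_le_mul_of_nonneg_left this (Real.exp_pos _).le) (norm_nonneg _)
        _ = ‖B‖ * Real.exp (a * (h + θ)) := by rw [e1, mul_comm]
    · rw [sub_zero]
      refine (l2_opNorm_mul _ _).trans ?_
      have h3 : ‖NormedSpace.exp ((-(δh + θ)) • A)‖ ≤ Real.exp (a * (h + θ)) := by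
        refine (my_norm_exp_le matrix_norm_one_le _).trans ?_
        rw [norm_smul, Real.norm_eq_abs, abs_neg, abs_of_nonneg (by linarith), ← haa, mul_comm]
        exact Real.exp_le_exp.mpr (by nlinarith)
      calc ‖NormedSpace.exp ((-(δh + θ)) • A)‖ * ‖B‖
          ≤ Real.exp (a * (h + θ)) * ‖B‖ := mul_le_mul_of_nonneg_right h3 (norm_nonneg _)
        _ = ‖B‖ * Real.exp (a * (h + θ)) := mul_comm _ _
    · rw [zero_sub, norm_neg]
      refine (l2_opNorm_mul _ _).trans ?_
      have h3 : ‖NormedSpace.exp ((-(δ + θ)) • A)‖ ≤ Real.exp (a * (h + θ)) := by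
        refine (my_norm_exp_le matrix_norm_one_le _).trans ?_
        rw [norm_smul, Real.norm_eq_abs, abs_neg, abs_of_nonneg (by linarith), ← haa, mul_comm]
        exact Real.exp_le_exp.mpr (by nlinarith)
      calc ‖NormedSpace.exp ((-(δ + θ)) • A)‖ * ‖B‖
          ≤ Real.exp (a * (h + θ)) * ‖B‖ := mul_le_mul_of_nonneg_right h3 (norm_nonneg _)
        _ = ‖B‖ * Real.exp (a * (h + θ)) := mul_comm _ _
    · rw [sub_zero, norm_zero]; positivity
  -- sharper bound on [-m, 0]
  have claim2 : ∀ θ ∈ Set.Icc (-m) (0:ℝ),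
      ‖fh θ - f θ‖ ≤ ‖B‖ * E * Real.exp (a * (h + θ)) := by
    rintro θ ⟨h1, h2⟩
    have c2 : -δ ≤ θ := by
      have : m ≤ δ := min_le_left _ _
      linarith
    have c1 : -δh ≤ θ := by
      have : m ≤ δh := min_le_right _ _
      linarith
    simp only [hf, hfh, if_pos c1, if_pos c2]
    refine (key θ h1).trans ?_
    have h4 : Real.exp (a * (m + θ)) ≤ Real.exp (a * (h + θ)) :=
      Real.exp_le_exp.mpr (by nlinarith)
    calc Real.exp (a * (m + θ)) * E * ‖B‖
        ≤ Real.exp (a * (h + θ)) * E * ‖B‖ := by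
          exact mul_le_mul_of_nonneg_right (mul_le_mul_of_nonneg_right h4 hE0) (norm_nonneg _)
      _ = ‖B‖ * E * Real.exp (a * (h + θ)) := by ring
  -- measurability and integrability
  have hcont : Continuous fun θ : ℝ => Real.exp (a * (h + θ)) :=
    Real.continuous_exp.comp (continuous_const.mul (continuous_const.add continuous_id))
  have hcg : ∀ d : ℝ, Continuous fun θ : ℝ => NormedSpace.exp ((-(d + θ)) • A) * B := by
    intro d
    refine Continuous.matrix_mul ?_ continuous_const
    letI : NormedAlgebra ℚ (Matrix (Fin n) (Fin n) ℝ) := NormedAlgebra.restrictScalars ℚ ℝ _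
    exact NormedSpace.exp_continuous.comp
      (Continuous.smul ((continuous_const.add continuous_id).neg) continuous_const)
  have hsmf : MeasureTheory.StronglyMeasurable f := by
    rw [hf]
    exact MeasureTheory.StronglyMeasurable.ite
      (measurableSet_le measurable_const measurable_id)
      (hcg δ).stronglyMeasurable continuous_const.stronglyMeasurable
  have hsmfh : MeasureTheory.StronglyMeasurable fh := by
    rw [hfh]
    exact MeasureTheory.StronglyMeasurable.ite
      (measurableSet_le measurable_const measurable_id)
      (hcg δh).stronglyMeasurable continuous_const.stronglyMeasurable
  have hsmG : MeasureTheory.StronglyMeasurable fun θ => ‖fh θ - f θ‖ ^ 2 :=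
    ((hsmfh.sub hsmf).norm.pow 2)
  have hInt : ∀ c d : ℝ, -h ≤ c → d ≤ 0 → c ≤ d →
      IntervalIntegrable (fun θ => ‖fh θ - f θ‖ ^ 2) volume c d := by
    intro c d hc hd hcd
    rw [intervalIntegrable_iff_integrableOn_Icc_of_le hcd]
    refine Integrable.mono' (g := fun _ => (‖B‖ * Real.exp (a * h)) ^ 2)
      (integrableOn_const measure_Icc_lt_top.ne)
      hsmG.aestronglyMeasurable.restrict ?_
    filter_upwards [ae_restrict_mem measurableSet_Icc] with θ hθ
    rw [Real.norm_eq_abs, abs_of_nonneg (by positivity)]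
    have hb := claim1 θ ⟨by linarith [hθ.1], by linarith [hθ.2]⟩
    have hb2 : ‖fh θ - f θ‖ ≤ ‖B‖ * Real.exp (a * h) := by
      refine hb.trans ?_
      have : Real.exp (a * (h + θ)) ≤ Real.exp (a * h) :=
        Real.exp_le_exp.mpr (by nlinarith [hθ.2])
      exact mul_le_mul_of_nonneg_left this (norm_nonneg _)
    exact pow_le_pow_left₀ (norm_nonneg _) hb2 2
  -- split the integral
  have hsplit : (∫ θ in (-h)..0, ‖fh θ - f θ‖ ^ 2)
      = (∫ θ in (-h)..(-m), ‖fh θ - f θ‖ ^ 2) + ∫ θ in (-m)..0, ‖fh θ - f θ‖ ^ 2 :=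
    (intervalIntegral.integral_add_adjacent_intervals
      (hInt _ _ le_rfl (by linarith) (by linarith))
      (hInt _ _ (by linarith) le_rfl (by linarith))).symm
  -- bound each piece
  have hI1 : (∫ θ in (-h)..(-m), ‖fh θ - f θ‖ ^ 2)
      ≤ ∫ θ in (-h)..(-m), (‖B‖ * Real.exp (a * (h + θ))) ^ 2 := by
    refine intervalIntegral.integral_mono_on (by linarith)
      (hInt _ _ le_rfl (by linarith) (by linarith))
      (((continuous_const.mul hcont).pow 2).intervalIntegrable _ _) ?_
    intro θ hθ
    exact pow_le_pow_left₀ (norm_nonneg _)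
      (claim1 θ ⟨hθ.1, by linarith [hθ.2]⟩) 2
  have hI2 : (∫ θ in (-m)..0, ‖fh θ - f θ‖ ^ 2)
      ≤ ∫ θ in (-m)..0, (‖B‖ * E * Real.exp (a * (h + θ))) ^ 2 := by
    refine intervalIntegral.integral_mono_on (by linarith)
      (hInt _ _ (by linarith) le_rfl (by linarith))
      (((continuous_const.mul hcont).pow 2).intervalIntegrable _ _) ?_
    intro θ hθ
    exact pow_le_pow_left₀ (norm_nonneg _) (claim2 θ hθ) 2
  -- compute the bounding integrals
  have hsq : ∀ (K θ : ℝ), (K * Real.exp (a * (h + θ))) ^ 2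
      = K ^ 2 * Real.exp (2 * a * (h + θ)) := by
    intro K θ
    rw [mul_pow, sq (Real.exp _), ← Real.exp_add]
    congr 2
    ring
  have hJ1 : (∫ θ in (-h)..(-m), (‖B‖ * Real.exp (a * (h + θ))) ^ 2)
      = ‖B‖ ^ 2 * ((Real.exp (2 * a * |δh - δ|) - 1) / (2 * a)) := by
    have : (∫ θ in (-h)..(-m), (‖B‖ * Real.exp (a * (h + θ))) ^ 2)
        = ∫ θ in (-h)..(-m), ‖B‖ ^ 2 * Real.exp (2 * a * (h + θ)) := by
      apply intervalIntegral.integral_congr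
      intro θ _
      exact hsq ‖B‖ θ
    rw [this, intervalIntegral.integral_const_mul, integral_exp_aff a _ _ h (by positivity),
      show h + -m = |δh - δ| from by rw [← hΔ]; ring,
      show h + -h = 0 from by ring, mul_zero, Real.exp_zero]
  have hJ2 : (∫ θ in (-m)..0, (‖B‖ * E * Real.exp (a * (h + θ))) ^ 2)
      ≤ ‖B‖ ^ 2 * E ^ 2 * ((Real.exp (2 * a * h) - 1) / (2 * a)) := by
    have e1 : (∫ θ in (-m)..0, (‖B‖ * E * Real.exp (a * (h + θ))) ^ 2)
        = ∫ θ in (-m)..0, (‖B‖ * E) ^ 2 * Real.exp (2 * a * (h + θ)) := by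
      apply intervalIntegral.integral_congr
      intro θ _
      exact hsq (‖B‖ * E) θ
    rw [e1, intervalIntegral.integral_const_mul, integral_exp_aff a _ _ h (by positivity)]
    rw [add_zero, mul_pow]
    have e2 : (1:ℝ) ≤ Real.exp (2 * a * (h + -m)) :=
      Real.one_le_exp (by nlinarith)
    have e3 : (Real.exp (2 * a * h) - Real.exp (2 * a * (h + -m))) / (2 * a)
        ≤ (Real.exp (2 * a * h) - 1) / (2 * a) := by
      apply div_le_div_of_nonneg_right ?_ (by positivity)
      linarith
    exact mul_le_mul_of_nonneg_left e3 (mul_nonneg (by positivity) (sq_nonneg E))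
  calc (∫ θ in (-h)..0, ‖fh θ - f θ‖ ^ 2)
      = (∫ θ in (-h)..(-m), ‖fh θ - f θ‖ ^ 2) + ∫ θ in (-m)..0, ‖fh θ - f θ‖ ^ 2 := hsplit
    _ ≤ ‖B‖ ^ 2 * ((Real.exp (2 * a * |δh - δ|) - 1) / (2 * a))
        + ‖B‖ ^ 2 * E ^ 2 * ((Real.exp (2 * a * h) - 1) / (2 * a)) :=
      add_le_add (hI1.trans (le_of_eq hJ1)) (hI2.trans hJ2)
    _ = ‖B‖ ^ 2 / (2 * a) * (Real.exp (2 * a * |δh - δ|) - 1)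
        + ‖B‖ ^ 2 / (2 * a) * (Real.exp (2 * a * h) - 1) * E ^ 2 := by ring
end
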